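/- arXiv:2010.06365 — 3 statements merged into one kernel-verified Lean document; each statement's English description precedes it below -/
import Mathlib

section
/- Let T be an operator on C^d ⊗ C^d such that ⟨x⊗x| T |x⊗x⟩ = 1 for every unit vector x ∈ C^d. Then Π_S T Π_S = Π_S, where Π_S = (I + F)/2 is the orthogonal projection onto the symmetric subspace and F is the flip operator. Equivalently, T = (I+F)/2 + T' with Π_S T' Π_S = 0. -/
open Matrix

/-- The flipOp (swap) operator on `ℂ^d ⊗ ℂ^d`, `F(x ⊗ y) = y ⊗ x`. -/
def flipOp (d : ℕ) : Matrix (Fin d × Fin d) (Fin d × Fin d) ℂ :=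
  Matrix.of fun p q => if p.1 = q.2 ∧ p.2 = q.1 then 1 else 0


section helpers
private lemma lemA (c00 c01 c02 c10 c11 c12 c20 c21 c22 : ℂ)
    (h : ∀ t : ℂ, c00 + c01 * t + c02 * t ^ 2 + c10 * (starRingEnd ℂ t)
      + c11 * ((starRingEnd ℂ t) * t) + c12 * ((starRingEnd ℂ t) * t ^ 2)
      + c20 * (starRingEnd ℂ t) ^ 2 + c21 * ((starRingEnd ℂ t) ^ 2 * t)
      + c22 * ((starRingEnd ℂ t) ^ 2 * t ^ 2) = 0) :
    c11 = 0 ∧ c02 = 0 := by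
  have h1 := h 0
  have h2 := h (-1 + Complex.I)
  have h3 := h (2 * Complex.I)
  have h4 := h (-Complex.I)
  have h5 := h (-2)
  have h6 := h (-1)
  have h7 := h (-2 * Complex.I)
  have h8 := h Complex.I
  have h9 := h (-1 - Complex.I)
  simp only [map_add, map_neg, _root_.map_mul, _root_.map_one, map_ofNat, map_sub, map_zero,
    Complex.conj_I] at h1 h2 h3 h4 h5 h6 h7 h8 h9
  constructor
  · linear_combination (-2:ℂ)*h1 + (-3/4:ℂ)*h2 + (-1/24:ℂ)*h3 + (7/6:ℂ)*h4
      + (1/4:ℂ)*h5 + h6 + (-1/24:ℂ)*h7 + (7/6:ℂ)*h8 + (-3/4:ℂ)*h9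
      - ((1/2:ℂ)*c02 - (1/2:ℂ)*c11 - (3/2:ℂ)*c12 + (1/2:ℂ)*c20 - (3/2:ℂ)*c21
         + ((7/2:ℂ) - (1/2:ℂ)*Complex.I^2)*c22) * Complex.I_sq
  · linear_combination (-3/8:ℂ)*h1 + ((-3/8:ℂ)+(1/8:ℂ)*Complex.I)*h2
      + (-(1/48:ℂ)*Complex.I)*h3 + ((1/4:ℂ)+(1/12:ℂ)*Complex.I)*h4 + (1/8:ℂ)*h5
      + (1/2:ℂ)*h6 + ((1/48:ℂ)*Complex.I)*h7 + ((1/4:ℂ)-(1/12:ℂ)*Complex.I)*h8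
      + ((-3/8:ℂ)-(1/8:ℂ)*Complex.I)*h9
      - ((-3/4:ℂ)*c02 + (1/4:ℂ)*c11 + ((-3/4:ℂ)+(1/4:ℂ)*Complex.I^2)*c12
         + (1/4:ℂ)*c20 + ((-3/4:ℂ)-(1/4:ℂ)*Complex.I^2)*c21
         + ((7/4:ℂ)-(1/4:ℂ)*Complex.I^2)*c22) * Complex.I_sq

private def Tv {d : ℕ} (x y : Fin d → ℂ) : Fin d × Fin d → ℂ := fun p => x p.1 * y p.2

private lemma expand {d : ℕ} (N : Matrix (Fin d × Fin d) (Fin d × Fin d) ℂ)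
    (A0 A1 A2 : Fin d × Fin d → ℂ) (t : ℂ) :
    star (A0 + t • A1 + t ^ 2 • A2) ⬝ᵥ (N *ᵥ (A0 + t • A1 + t ^ 2 • A2)) =
      (star A0 ⬝ᵥ (N *ᵥ A0)) + (star A0 ⬝ᵥ (N *ᵥ A1)) * t + (star A0 ⬝ᵥ (N *ᵥ A2)) * t ^ 2
      + (star A1 ⬝ᵥ (N *ᵥ A0)) * (starRingEnd ℂ t)
      + (star A1 ⬝ᵥ (N *ᵥ A1)) * ((starRingEnd ℂ t) * t)
      + (star A1 ⬝ᵥ (N *ᵥ A2)) * ((starRingEnd ℂ t) * t ^ 2)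
      + (star A2 ⬝ᵥ (N *ᵥ A0)) * (starRingEnd ℂ t) ^ 2
      + (star A2 ⬝ᵥ (N *ᵥ A1)) * ((starRingEnd ℂ t) ^ 2 * t)
      + (star A2 ⬝ᵥ (N *ᵥ A2)) * ((starRingEnd ℂ t) ^ 2 * t ^ 2) := by
  simp only [star_add, star_smul, mulVec_add, mulVec_smul, add_dotProduct,
    dotProduct_add, smul_dotProduct, dotProduct_smul, smul_eq_mul, star_pow,
    Complex.star_def]
  ring

private lemma flip_apply {d : ℕ} (p q : Fin d × Fin d) :
    flipOp d p q = if q = (p.2, p.1) then 1 else 0 := by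
  have : (p.1 = q.2 ∧ p.2 = q.1) ↔ q = (p.2, p.1) := by
    constructor
    · rintro ⟨h1, h2⟩; exact Prod.ext h2.symm h1.symm
    · rintro rfl; exact ⟨rfl, rfl⟩
  simp [flipOp, this]

private lemma flip_apply' {d : ℕ} (p q : Fin d × Fin d) :
    flipOp d p q = if p = (q.2, q.1) then 1 else 0 := by
  have : (p.1 = q.2 ∧ p.2 = q.1) ↔ p = (q.2, q.1) := by
    constructor
    · rintro ⟨h1, h2⟩; exact Prod.ext h1 h2
    · rintro rfl; exact ⟨rfl, rfl⟩
  simp [flipOp, this]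

private lemma flip_mulVec {d : ℕ} (v : Fin d × Fin d → ℂ) (p : Fin d × Fin d) :
    (flipOp d *ᵥ v) p = v (p.2, p.1) := by
  simp [mulVec, dotProduct, flip_apply, ite_mul, one_mul, zero_mul]

private lemma flip_mul_apply {d : ℕ} (A : Matrix (Fin d × Fin d) (Fin d × Fin d) ℂ)
    (p q : Fin d × Fin d) : (flipOp d * A) p q = A (p.2, p.1) q := by
  rw [mul_apply]
  simp [flip_apply, ite_mul, one_mul, zero_mul]

private lemma mul_flip_apply {d : ℕ} (A : Matrix (Fin d × Fin d) (Fin d × Fin d) ℂ)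
    (p q : Fin d × Fin d) : (A * flipOp d) p q = A p (q.2, q.1) := by
  rw [mul_apply]
  simp [flip_apply', mul_ite, mul_one, mul_zero]

private lemma flipOp_flip {d : ℕ} : flipOp d * flipOp d = 1 := by
  ext p q
  rw [flip_mul_apply, flip_apply, one_apply]
  simp [eq_comm]

private lemma flip_transpose {d : ℕ} : (flipOp d)ᵀ = flipOp d := by
  ext p q
  simp only [transpose_apply, flipOp, of_apply]
  congr 1
  · exact propext ⟨fun ⟨a, b⟩ => ⟨b.symm, a.symm⟩, fun ⟨a, b⟩ => ⟨b.symm, a.symm⟩⟩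

end helpers

/-- If `⟨x⊗x| T |x⊗x⟩ = 1` for every unit vector `x ∈ ℂ^d`, then
`Π_S T Π_S = Π_S` where `Π_S = (I + F)/2` is the projection onto the symmetric
subspace. -/
theorem stmt3 {d : ℕ} (T : Matrix (Fin d × Fin d) (Fin d × Fin d) ℂ)
    (h : ∀ x : Fin d → ℂ, star x ⬝ᵥ x = 1 →
      star (fun p : Fin d × Fin d => x p.1 * x p.2) ⬝ᵥ
        (T *ᵥ fun p : Fin d × Fin d => x p.1 * x p.2) = 1) :
    ((2 : ℂ)⁻¹ • (1 + flipOp d)) * T * ((2 : ℂ)⁻¹ • (1 + flipOp d))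
      = (2 : ℂ)⁻¹ • (1 + flipOp d) := by
  set P : Matrix (Fin d × Fin d) (Fin d × Fin d) ℂ := (2 : ℂ)⁻¹ • (1 + flipOp d) with hP
  rw [← sub_eq_zero]
  set N : Matrix (Fin d × Fin d) (Fin d × Fin d) ℂ := P * T * P - P with hNdef
  -- P applied to a vector
  have hPv : ∀ (v : Fin d × Fin d → ℂ) (p : Fin d × Fin d),
      (P *ᵥ v) p = 2⁻¹ * (v p + v (p.2, p.1)) := by
    intro v p
    rw [hP, smul_mulVec, add_mulVec, one_mulVec]
    simp [flip_mulVec, smul_eq_mul]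
  have hPTv : ∀ y : Fin d → ℂ, P *ᵥ Tv y y = Tv y y := by
    intro y
    funext p
    rw [hPv]
    simp only [Tv]
    ring
  have hstarTv : ∀ x : Fin d → ℂ, star (Tv x x) = Tv (star x) (star x) := by
    intro x
    funext p
    simp [Tv, star_mul']
  have hPT : Pᵀ = P := by
    rw [hP]
    simp [transpose_smul, transpose_add, flip_transpose]
  have hPdot : ∀ (x : Fin d → ℂ) (w : Fin d × Fin d → ℂ),
      star (Tv x x) ⬝ᵥ (P *ᵥ w) = star (Tv x x) ⬝ᵥ w := by
    intro x w
    rw [dotProduct_mulVec]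
    congr 1
    rw [← hPT, vecMul_transpose, hstarTv]
    exact hPTv _
  -- the quartic form vanishes on unit vectors
  have hQ1 : ∀ x : Fin d → ℂ, star x ⬝ᵥ x = 1 →
      star (Tv x x) ⬝ᵥ (N *ᵥ Tv x x) = 0 := by
    intro x hx
    have hTT : star (Tv x x) ⬝ᵥ Tv x x = (star x ⬝ᵥ x) * (star x ⬝ᵥ x) := by
      have e1 : star (Tv x x) ⬝ᵥ Tv x x
          = ∑ p : Fin d × Fin d, (star x p.1 * x p.1) * (star x p.2 * x p.2) := by
        simp only [dotProduct]
        refine Finset.sum_congr rfl fun p _ => ?_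
        simp [Tv, star_mul']
        ring
      rw [e1, Fintype.sum_prod_type]
      simp only [dotProduct, Pi.star_apply]
      rw [Finset.sum_mul_sum]
    have hNx : N *ᵥ Tv x x = P *ᵥ (T *ᵥ Tv x x) - Tv x x := by
      rw [hNdef, sub_mulVec]
      rw [← mulVec_mulVec, ← mulVec_mulVec, hPTv]
    rw [hNx, dotProduct_sub, hPdot]
    have hx2 := h x hx
    have : star (Tv x x) ⬝ᵥ (T *ᵥ Tv x x) = 1 := hx2
    rw [this, hTT, hx]
    norm_num
  -- the quartic form vanishes everywhere
  have hQ : ∀ x : Fin d → ℂ, star (Tv x x) ⬝ᵥ (N *ᵥ Tv x x) = 0 := by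
    intro x
    by_cases hx : x = 0
    · subst hx
      have : Tv (0 : Fin d → ℂ) 0 = 0 := by funext p; simp [Tv]
      rw [this]
      simp
    · have hex : ∃ i, x i ≠ 0 := Function.ne_iff.mp hx
      have hspos : 0 < ∑ i, Complex.normSq (x i) := by
        obtain ⟨i, hi⟩ := hex
        refine Finset.sum_pos' (fun j _ => Complex.normSq_nonneg _) ⟨i, Finset.mem_univ i, ?_⟩
        exact Complex.normSq_pos.mpr hi
      set s : ℝ := Real.sqrt (∑ i, Complex.normSq (x i)) with hs
      have hspos' : 0 < s := Real.sqrt_pos.mpr hspos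
      have hsne : (s : ℂ) ≠ 0 := Complex.ofReal_ne_zero.mpr hspos'.ne'
      set u : Fin d → ℂ := fun i => (s : ℂ)⁻¹ * x i with hu
      have hxu : ∀ i, x i = (s : ℂ) * u i := by
        intro i
        rw [hu]
        field_simp
      have huu : star u ⬝ᵥ u = 1 := by
        have e1 : star u ⬝ᵥ u = (s : ℂ)⁻¹ * (s : ℂ)⁻¹ * ∑ i, (Complex.normSq (x i) : ℂ) := by
          simp only [dotProduct, Pi.star_apply, hu, Finset.mul_sum]
          refine Finset.sum_congr rfl fun i _ => ?_
          rw [Complex.normSq_eq_conj_mul_self]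
          simp only [star_mul', Complex.star_def, Complex.conj_ofReal, map_inv₀]
          ring
        rw [e1, ← Complex.ofReal_sum]
        have e2 : ((∑ i, Complex.normSq (x i) : ℝ) : ℂ) = (s : ℂ) ^ 2 := by
          rw [hs]
          norm_cast
          rw [Real.sq_sqrt hspos.le]
        rw [e2]
        field_simp
      have hTv : Tv x x = ((s : ℂ) ^ 2) • Tv u u := by
        funext p
        simp only [Tv, Pi.smul_apply, smul_eq_mul, hxu]
        ring
      rw [hTv, mulVec_smul, star_smul, smul_dotProduct, dotProduct_smul, hQ1 u huu]
      simp
  -- polarization, stage 1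
  have hq1 : ∀ x y : Fin d → ℂ,
      star (Tv x y + Tv y x) ⬝ᵥ (N *ᵥ (Tv x y + Tv y x)) = 0 := by
    intro x y
    have hexp : ∀ t : ℂ, Tv (x + t • y) (x + t • y)
        = Tv x x + t • (Tv x y + Tv y x) + t ^ 2 • Tv y y := by
      intro t
      funext p
      simp only [Tv, Pi.add_apply, Pi.smul_apply, smul_eq_mul]
      ring
    have key : ∀ t : ℂ,
        (star (Tv x x) ⬝ᵥ (N *ᵥ Tv x x))
        + (star (Tv x x) ⬝ᵥ (N *ᵥ (Tv x y + Tv y x))) * t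
        + (star (Tv x x) ⬝ᵥ (N *ᵥ Tv y y)) * t ^ 2
        + (star (Tv x y + Tv y x) ⬝ᵥ (N *ᵥ Tv x x)) * (starRingEnd ℂ t)
        + (star (Tv x y + Tv y x) ⬝ᵥ (N *ᵥ (Tv x y + Tv y x))) * ((starRingEnd ℂ t) * t)
        + (star (Tv x y + Tv y x) ⬝ᵥ (N *ᵥ Tv y y)) * ((starRingEnd ℂ t) * t ^ 2)
        + (star (Tv y y) ⬝ᵥ (N *ᵥ Tv x x)) * (starRingEnd ℂ t) ^ 2
        + (star (Tv y y) ⬝ᵥ (N *ᵥ (Tv x y + Tv y x))) * ((starRingEnd ℂ t) ^ 2 * t)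
        + (star (Tv y y) ⬝ᵥ (N *ᵥ Tv y y)) * ((starRingEnd ℂ t) ^ 2 * t ^ 2) = 0 := by
      intro t
      have := hQ (x + t • y)
      rw [hexp, expand] at this
      exact this
    exact (lemA _ _ _ _ _ _ _ _ _ key).1
  -- polarization, stage 2
  have hq2 : ∀ u v w z : Fin d → ℂ,
      star (Tv u v + Tv v u) ⬝ᵥ (N *ᵥ (Tv w z + Tv z w)) = 0 := by
    intro u v w z
    have hexp2 : ∀ t : ℂ, Tv (u + t • w) (v + t • z) + Tv (v + t • z) (u + t • w)
        = (Tv u v + Tv v u) + t • ((Tv u z + Tv z u) + (Tv w v + Tv v w))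
          + t ^ 2 • (Tv w z + Tv z w) := by
      intro t
      funext p
      simp only [Tv, Pi.add_apply, Pi.smul_apply, smul_eq_mul]
      ring
    have key : ∀ t : ℂ,
        (star (Tv u v + Tv v u) ⬝ᵥ (N *ᵥ (Tv u v + Tv v u)))
        + (star (Tv u v + Tv v u) ⬝ᵥ (N *ᵥ ((Tv u z + Tv z u) + (Tv w v + Tv v w)))) * t
        + (star (Tv u v + Tv v u) ⬝ᵥ (N *ᵥ (Tv w z + Tv z w))) * t ^ 2
        + (star ((Tv u z + Tv z u) + (Tv w v + Tv v w)) ⬝ᵥ (N *ᵥ (Tv u v + Tv v u))) * (starRingEnd ℂ t)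
        + (star ((Tv u z + Tv z u) + (Tv w v + Tv v w)) ⬝ᵥ (N *ᵥ ((Tv u z + Tv z u) + (Tv w v + Tv v w)))) * ((starRingEnd ℂ t) * t)
        + (star ((Tv u z + Tv z u) + (Tv w v + Tv v w)) ⬝ᵥ (N *ᵥ (Tv w z + Tv z w))) * ((starRingEnd ℂ t) * t ^ 2)
        + (star (Tv w z + Tv z w) ⬝ᵥ (N *ᵥ (Tv u v + Tv v u))) * (starRingEnd ℂ t) ^ 2
        + (star (Tv w z + Tv z w) ⬝ᵥ (N *ᵥ ((Tv u z + Tv z u) + (Tv w v + Tv v w)))) * ((starRingEnd ℂ t) ^ 2 * t)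
        + (star (Tv w z + Tv z w) ⬝ᵥ (N *ᵥ (Tv w z + Tv z w))) * ((starRingEnd ℂ t) ^ 2 * t ^ 2) = 0 := by
      intro t
      have := hq1 (u + t • w) (v + t • z)
      rw [hexp2, expand] at this
      exact this
    exact (lemA _ _ _ _ _ _ _ _ _ key).2
  -- entrywise consequence on basis vectors
  have hTvE : ∀ i j : Fin d, Tv (Pi.single i (1:ℂ)) (Pi.single j (1:ℂ))
      = Pi.single ((i, j) : Fin d × Fin d) (1:ℂ) := by
    intro i j
    funext p
    by_cases h1 : p.1 = i <;> by_cases h2 : p.2 = j <;>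
      simp [Tv, Pi.single_apply, Prod.ext_iff, h1, h2]
  have hE : ∀ i j k l : Fin d,
      N (i, j) (k, l) + N (i, j) (l, k) + N (j, i) (k, l) + N (j, i) (l, k) = 0 := by
    intro i j k l
    have := hq2 (Pi.single i 1) (Pi.single j 1) (Pi.single k 1) (Pi.single l 1)
    rw [hTvE, hTvE, hTvE, hTvE] at this
    have hss : ∀ a : Fin d × Fin d, star (Pi.single a (1:ℂ) : Fin d × Fin d → ℂ) = Pi.single a (1:ℂ) := by
      intro a
      funext q
      simp [Pi.single_apply, apply_ite]
    have hNs : ∀ q : Fin d × Fin d, N *ᵥ (Pi.single q (1:ℂ) : Fin d × Fin d → ℂ) = fun p => N p q := by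
      intro q
      funext p
      simp [mulVec, dotProduct_single]
    simp only [mulVec_add, hNs, star_add, hss, add_dotProduct, dotProduct_add,
      single_dotProduct, one_mul] at this
    linear_combination this
  -- symmetry of N under flips
  have hFP : flipOp d * P = P := by
    rw [hP, mul_smul_comm, mul_add, mul_one, flipOp_flip, add_comm]
  have hPF : P * flipOp d = P := by
    rw [hP, smul_mul_assoc, add_mul, one_mul, flipOp_flip, add_comm]
  have hFN : flipOp d * N = N := by
    rw [hNdef, mul_sub, hFP, ← mul_assoc, ← mul_assoc, hFP]
  have hNF : N * flipOp d = N := by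
    rw [hNdef, sub_mul, hPF, mul_assoc, hPF]
  have hs1 : ∀ p q : Fin d × Fin d, N (p.2, p.1) q = N p q := by
    intro p q
    conv_rhs => rw [← hFN]
    rw [flip_mul_apply]
  have hs2 : ∀ p q : Fin d × Fin d, N p (q.2, q.1) = N p q := by
    intro p q
    conv_rhs => rw [← hNF]
    rw [mul_flip_apply]
  -- conclude
  ext ⟨i, j⟩ ⟨k, l⟩
  have e1 := hE i j k l
  have e2 := hs1 (i, j) (k, l)
  have e3 := hs2 (i, j) (k, l)
  have e4 := hs2 (j, i) (k, l)
  simp only [Matrix.zero_apply]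
  linear_combination (1/4 : ℂ) * e1 - (1/2 : ℂ) * e2 - (1/4 : ℂ) * e3 - (1/4 : ℂ) * e4
end

section
/- Let {x_k}_{k=1}^{d²} be unit vectors in C^d forming a spherical 2-design, i.e. (1/d²) Σ_k (|x_k⟩⟨x_k|)^{⊗2} = (I+F)/(d(d+1)). Then |⟨x_k|x_l⟩|² = 1/(d+1) for all k ≠ l, i.e. Tr(|x_k⟩⟨x_k| · |x_l⟩⟨x_l|) = (δ_{kl}(d) + 1)/(d+1). -/
open Matrix Kronecker

lemma vmv_mul {d : ℕ} (a b c e : Fin d → ℂ) :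
    Matrix.vecMulVec a b * Matrix.vecMulVec c e = (b ⬝ᵥ c) • Matrix.vecMulVec a e := by
  ext i j
  simp only [Matrix.mul_apply, Matrix.vecMulVec_apply, Matrix.smul_apply, dotProduct,
    smul_eq_mul, Finset.sum_mul]
  exact Finset.sum_congr rfl fun m _ => by ring

lemma trace_vmv {d : ℕ} (a b : Fin d → ℂ) :
    (Matrix.vecMulVec a b).trace = a ⬝ᵥ b := by
  simp [Matrix.trace, Matrix.diag, Matrix.vecMulVec_apply, dotProduct]

lemma trace_flip_kron {d : ℕ} (A B : Matrix (Fin d) (Fin d) ℂ) :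
    (flipOp d * (A ⊗ₖ B)).trace = (A * B).trace := by
  calc (flipOp d * (A ⊗ₖ B)).trace = ∑ p : Fin d × Fin d, (A ⊗ₖ B) (p.2, p.1) p := by
        simp only [Matrix.trace, Matrix.diag, Matrix.mul_apply, flipOp, Matrix.of_apply, boole_mul]
        refine Finset.sum_congr rfl fun p _ => ?_
        rw [Finset.sum_eq_single (p.2, p.1)]
        · simp
        · intro q _ hq
          have : ¬(p.1 = q.2 ∧ p.2 = q.1) := by
            rintro ⟨h1, h2⟩; exact hq (Prod.ext h2.symm h1.symm)
          simp [this]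
        · simp
    _ = (A * B).trace := by
        simp only [Matrix.kroneckerMap_apply, Matrix.trace, Matrix.diag, Matrix.mul_apply,
          Fintype.sum_prod_type]
        rw [Finset.sum_comm]

/-- For unit vectors `{x_k}` forming a spherical 2-design in `ℂ^d`:
`Tr(|x_k⟩⟨x_k| |x_l⟩⟨x_l|) = (δₖₗ d + 1)/(d+1)`. -/
theorem stmt9 {d : ℕ} (hd : 0 < d) (x : Fin (d ^ 2) → (Fin d → ℂ))
    (hunit : ∀ k, star (x k) ⬝ᵥ x k = 1)
    (hdesign : ((d : ℂ) ^ 2)⁻¹ •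
        ∑ k, Matrix.vecMulVec (x k) (star (x k)) ⊗ₖ Matrix.vecMulVec (x k) (star (x k))
      = ((d : ℂ) * ((d : ℂ) + 1))⁻¹ • (1 + flipOp d)) :
    ∀ k l, (Matrix.vecMulVec (x k) (star (x k)) * Matrix.vecMulVec (x l) (star (x l))).trace
      = ((if k = l then (d : ℂ) else 0) + 1) / ((d : ℂ) + 1) := by
  intro k l
  have hd0 : (d : ℂ) ≠ 0 := Nat.cast_ne_zero.2 hd.ne'
  have hd1 : (d : ℂ) + 1 ≠ 0 := by
    have : ((d + 1 : ℕ) : ℂ) ≠ 0 := Nat.cast_ne_zero.2 (Nat.succ_ne_zero d)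
    simpa using this
  have hd1R : (d : ℝ) + 1 ≠ 0 := by positivity
  have htr1 : ∀ m, (Matrix.vecMulVec (x m) (star (x m))).trace = 1 := by
    intro m
    rw [trace_vmv, dotProduct_comm]
    exact hunit m
  set c : Fin (d ^ 2) → ℂ := fun m => star (x m) ⬝ᵥ x l with hc
  have hcl : c l = 1 := hunit l
  have htrPP : ∀ m,
      (Matrix.vecMulVec (x m) (star (x m)) * Matrix.vecMulVec (x l) (star (x l))).trace
        = (Complex.normSq (c m) : ℂ) := by
    intro m
    rw [vmv_mul, Matrix.trace_smul, trace_vmv, smul_eq_mul]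
    have h1 : x m ⬝ᵥ star (x l) = starRingEnd ℂ (c m) := by
      simp [hc, dotProduct, map_sum, mul_comm]
    rw [h1]
    exact Complex.mul_conj (c m)
  -- Equation B : sum of overlaps equals d
  have hB := congrArg
    (fun M => (M * ((1 : Matrix (Fin d) (Fin d) ℂ) ⊗ₖ
      Matrix.vecMulVec (x l) (star (x l)))).trace) hdesign
  simp only [Matrix.smul_mul, Finset.sum_mul, ← Matrix.mul_kronecker_mul, Matrix.mul_one,
    Matrix.one_mul, Matrix.add_mul, Matrix.trace_smul, Matrix.trace_sum, Matrix.trace_add,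
    Matrix.trace_kronecker, trace_flip_kron, Matrix.trace_one, htr1, htrPP, one_mul, mul_one,
    smul_eq_mul, Fintype.card_fin] at hB
  -- Equation A : sum of squared overlaps
  have hA := congrArg
    (fun M => (M * (Matrix.vecMulVec (x l) (star (x l)) ⊗ₖ
      Matrix.vecMulVec (x l) (star (x l)))).trace) hdesign
  simp only [Matrix.smul_mul, Finset.sum_mul, ← Matrix.mul_kronecker_mul, Matrix.mul_one,
    Matrix.one_mul, Matrix.add_mul, Matrix.trace_smul, Matrix.trace_sum, Matrix.trace_add,
    Matrix.trace_kronecker, trace_flip_kron, Matrix.trace_one, htr1, htrPP, one_mul, mul_one,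
    smul_eq_mul, Fintype.card_fin, hcl, Complex.normSq_one] at hA
  have hBr : ∑ m, Complex.normSq (c m) = (d : ℝ) := by
    have h2 : (∑ m, (Complex.normSq (c m) : ℂ)) = (d : ℂ) := by
      refine mul_right_cancel₀ (mul_ne_zero hd0 hd1) ?_
      field_simp at hB
      linear_combination ((d : ℂ) * ((d : ℂ) + 1)) * hB
    exact_mod_cast h2
  have hAr : ((d : ℝ) + 1) * ∑ m, Complex.normSq (c m) ^ 2 = 2 * d := by
    have h2 : ((d : ℂ) + 1) * ∑ m, (Complex.normSq (c m) : ℂ) ^ 2 = 2 * (d : ℂ) := by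
      have e : ∑ m, ((Complex.normSq (c m) : ℂ)) ^ 2
          = ∑ m, (Complex.normSq (c m) : ℂ) * (Complex.normSq (c m) : ℂ) :=
        Finset.sum_congr rfl fun m _ => sq _
      rw [e]
      refine mul_right_cancel₀ hd0 ?_
      field_simp at hA
      rw [← e]
      push_cast at hA ⊢
      linear_combination (d : ℂ) * hA
    exact_mod_cast h2
  have hsl : Complex.normSq (c l) = 1 := by rw [hcl]; simp
  set a : Fin (d ^ 2) → ℝ := fun m => if m = l then 1 else 1 / ((d : ℝ) + 1) with ha
  have expand : ∀ m, (Complex.normSq (c m) - a m) ^ 2 =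
      (Complex.normSq (c m) ^ 2 - 2 / ((d : ℝ) + 1) * Complex.normSq (c m)
          + 1 / ((d : ℝ) + 1) ^ 2)
        + (if m = l then (Complex.normSq (c m) - 1) ^ 2
            - (Complex.normSq (c m) - 1 / ((d : ℝ) + 1)) ^ 2 else 0) := by
    intro m
    by_cases h : m = l
    · simp only [ha, if_pos h]; field_simp; ring
    · simp only [ha, if_neg h]; field_simp; ring
  have hz : ∑ m, (Complex.normSq (c m) - a m) ^ 2 = 0 := by
    calc ∑ m, (Complex.normSq (c m) - a m) ^ 2
        = ∑ m, ((Complex.normSq (c m) ^ 2 - 2 / ((d : ℝ) + 1) * Complex.normSq (c m)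
            + 1 / ((d : ℝ) + 1) ^ 2)
          + (if m = l then (Complex.normSq (c m) - 1) ^ 2
              - (Complex.normSq (c m) - 1 / ((d : ℝ) + 1)) ^ 2 else 0)) :=
          Finset.sum_congr rfl fun m _ => expand m
      _ = (∑ m, Complex.normSq (c m) ^ 2)
            - 2 / ((d : ℝ) + 1) * (∑ m, Complex.normSq (c m))
            + (d ^ 2 : ℝ) * (1 / ((d : ℝ) + 1) ^ 2)
            + ((Complex.normSq (c l) - 1) ^ 2
              - (Complex.normSq (c l) - 1 / ((d : ℝ) + 1)) ^ 2) := by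
          rw [Finset.sum_add_distrib, Finset.sum_ite_eq' Finset.univ l]
          simp only [Finset.mem_univ, if_true]
          rw [Finset.sum_add_distrib, Finset.sum_sub_distrib, Finset.sum_const,
            ← Finset.mul_sum, Finset.card_univ, Fintype.card_fin]
          ring
      _ = 0 := by
          have h1 : ∑ m, Complex.normSq (c m) ^ 2 = 2 * d / ((d : ℝ) + 1) := by
            rw [eq_div_iff hd1R]
            linarith [hAr]
          rw [h1, hBr, hsl]
          field_simp
          ring
  have hk0 : (Complex.normSq (c k) - a k) ^ 2 = 0 :=
    (Finset.sum_eq_zero_iff_of_nonneg (fun m _ => sq_nonneg _)).1 hz k (Finset.mem_univ k)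
  have hk : Complex.normSq (c k) = a k := by
    have := pow_eq_zero_iff (n := 2) (by norm_num) |>.1 hk0
    linarith [sub_eq_zero.1 this]
  rw [htrPP k, hk]
  by_cases hkl : k = l
  · simp only [ha, if_pos hkl]
    field_simp
    simp
  · simp only [ha, if_neg hkl]
    push_cast
    rw [zero_add]
end

section
/- Let {a_1,...,a_n} and {b_1,...,b_n} be two orthonormal bases of C^n, and γ_1,...,γ_n complex numbers with |γ_i| ≥ 1 for all i. Define S = Σ_i γ_i |a_i⟩⟨b_i|. Then for every X ∈ M_n(C): ||S X S*||_1 ≥ ||X||_1 + Σ_i (|γ_i|² - 1) ⟨b_i| X |b_i⟩. -/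
open Matrix

/-- The Schatten 1-norm (trace norm) of a complex matrix: `Tr √(XᴴX)`. -/
noncomputable def traceNorm {n : Type*} [Fintype n] [DecidableEq n]
    (X : Matrix n n ℂ) : ℝ :=
  (open ComplexOrder in ((Matrix.posSemidef_conjTranspose_mul_self X).1.eigenvectorUnitary.1 *
    diagonal (((↑) : ℝ → ℂ) ∘ (√·) ∘ (Matrix.posSemidef_conjTranspose_mul_self X).1.eigenvalues) *
    (star (Matrix.posSemidef_conjTranspose_mul_self X).1.eigenvectorUnitary : Matrix n n ℂ)).trace).re

open Matrix Complex Finset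

noncomputable section Aux11
open ComplexOrder


variable {n : ℕ}

/-- squared euclidean norm of a complex vector -/
def nsq (x : Fin n → ℂ) : ℝ := ∑ k, Complex.normSq (x k)

lemma nsq_nonneg (x : Fin n → ℂ) : 0 ≤ nsq x :=
  Finset.sum_nonneg fun _ _ => Complex.normSq_nonneg _

lemma dot_self_eq_nsq (x : Fin n → ℂ) : star x ⬝ᵥ x = (nsq x : ℂ) := by
  simp only [dotProduct, nsq, Pi.star_apply]
  push_cast
  refine Finset.sum_congr rfl fun k _ => ?_
  simp [Complex.normSq_eq_conj_mul_self, Complex.star_def]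

lemma re_dot_self_eq_nsq (x : Fin n → ℂ) : (star x ⬝ᵥ x).re = nsq x := by
  rw [dot_self_eq_nsq]; simp

/-- helper: rank one matrix times vector -/
lemma vecMulVec_mulVec (w u x : Fin n → ℂ) :
    vecMulVec w u *ᵥ x = (u ⬝ᵥ x) • w := by
  ext i
  simp [vecMulVec_apply, mulVec, dotProduct, Finset.mul_sum, mul_comm, mul_assoc, mul_left_comm]

lemma sum_mulVec {ι : Type*} (s : Finset ι) (A : ι → Matrix (Fin n) (Fin n) ℂ) (x : Fin n → ℂ) :
    (∑ i ∈ s, A i) *ᵥ x = ∑ i ∈ s, A i *ᵥ x := by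
  ext k
  simp only [mulVec, dotProduct, Matrix.sum_apply, Finset.sum_mul, Finset.sum_apply]
  rw [Finset.sum_comm]

lemma trace_vecMulVec_mul (y w : Fin n → ℂ) (A : Matrix (Fin n) (Fin n) ℂ) :
    (vecMulVec y (star w) * A).trace = star w ⬝ᵥ (A *ᵥ y) := by
  simp only [Matrix.trace, Matrix.diag, mul_apply, vecMulVec_apply, dotProduct, mulVec, Pi.star_apply]
  rw [Finset.sum_comm]
  refine Finset.sum_congr rfl fun k _ => ?_
  rw [Finset.mul_sum]
  refine Finset.sum_congr rfl fun j _ => by ring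

lemma vecMulVec_conjTranspose (w u : Fin n → ℂ) :
    (vecMulVec w u)ᴴ = vecMulVec (star u) (star w) := by
  ext i j
  simp [vecMulVec_apply, conjTranspose_apply, mul_comm]

/-- Cauchy–Schwarz for real sums with square roots -/
lemma sum_le_sqrt_mul_sqrt (f g : Fin n → ℝ) (hf : ∀ i, 0 ≤ f i) (hg : ∀ i, 0 ≤ g i) :
    ∑ i, f i * g i ≤ Real.sqrt (∑ i, f i ^ 2) * Real.sqrt (∑ i, g i ^ 2) := by
  rw [← Real.sqrt_mul (Finset.sum_nonneg fun i _ => sq_nonneg _)]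
  rw [show (∑ i, f i * g i) = Real.sqrt ((∑ i, f i * g i) ^ 2) from
    (Real.sqrt_sq (Finset.sum_nonneg fun i _ => mul_nonneg (hf i) (hg i))).symm]
  exact Real.sqrt_le_sqrt (Finset.sum_mul_sq_le_sq_mul_sq _ _ _)

/-- two-point Cauchy–Schwarz -/
lemma two_cs (a b c d : ℝ) (ha : 0 ≤ a) (hb : 0 ≤ b) (hc : 0 ≤ c) (hd : 0 ≤ d) :
    Real.sqrt a * Real.sqrt c + Real.sqrt b * Real.sqrt d
      ≤ Real.sqrt (a + b) * Real.sqrt (c + d) := by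
  rw [show Real.sqrt (a+b) * Real.sqrt (c+d) = Real.sqrt ((a+b)*(c+d)) from
    (Real.sqrt_mul (by linarith) _).symm]
  rw [show Real.sqrt a * Real.sqrt c + Real.sqrt b * Real.sqrt d
      = Real.sqrt ((Real.sqrt a * Real.sqrt c + Real.sqrt b * Real.sqrt d) ^ 2) from
    (Real.sqrt_sq (by positivity)).symm]
  refine Real.sqrt_le_sqrt ?_
  have h1 := Real.sq_sqrt ha
  have h2 := Real.sq_sqrt hb
  have h3 := Real.sq_sqrt hc
  have h4 := Real.sq_sqrt hd
  nlinarith [sq_nonneg (Real.sqrt a * Real.sqrt d - Real.sqrt b * Real.sqrt c),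
    Real.sqrt_nonneg a, Real.sqrt_nonneg b, Real.sqrt_nonneg c, Real.sqrt_nonneg d]

/-- abs of complex dot product Cauchy–Schwarz -/
lemma abs_dot_le (x y : Fin n → ℂ) :
    ‖star x ⬝ᵥ y‖ ≤ Real.sqrt (nsq x) * Real.sqrt (nsq y) := by
  calc ‖star x ⬝ᵥ y‖ ≤ ∑ k, ‖x k‖ * ‖y k‖ := by
        refine (norm_sum_le _ _).trans_eq ?_
        refine Finset.sum_congr rfl fun k _ => ?_
        simp [_root_.map_mul]
    _ ≤ Real.sqrt (∑ k, ‖x k‖ ^ 2) * Real.sqrt (∑ k, ‖y k‖ ^ 2) :=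
        sum_le_sqrt_mul_sqrt _ _ (fun i => norm_nonneg _) (fun i => norm_nonneg _)
    _ = Real.sqrt (nsq x) * Real.sqrt (nsq y) := by
        simp [nsq, Complex.sq_norm]


lemma dotProduct_finsum {ι : Type*} (s : Finset ι) (x : Fin n → ℂ) (f : ι → Fin n → ℂ) :
    x ⬝ᵥ (∑ i ∈ s, f i) = ∑ i ∈ s, x ⬝ᵥ f i := by
  simp only [dotProduct, Finset.sum_apply, Finset.mul_sum]
  rw [Finset.sum_comm]

lemma finsum_dotProduct {ι : Type*} (s : Finset ι) (x : Fin n → ℂ) (f : ι → Fin n → ℂ) :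
    (∑ i ∈ s, f i) ⬝ᵥ x = ∑ i ∈ s, f i ⬝ᵥ x := by
  simp only [dotProduct, Finset.sum_apply, Finset.sum_mul]
  rw [Finset.sum_comm]


section ONB
variable {n : ℕ} {v : Fin n → (Fin n → ℂ)}
  (hv : ∀ i j, star (v i) ⬝ᵥ v j = if i = j then 1 else 0)

include hv

lemma onb_complete : ∑ i, vecMulVec (v i) (star (v i)) = (1 : Matrix (Fin n) (Fin n) ℂ) := by
  set V : Matrix (Fin n) (Fin n) ℂ := Matrix.of fun i j => v j i with hV
  have h1 : Vᴴ * V = 1 := by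
    ext i j
    have := hv i j
    simpa [hV, mul_apply, conjTranspose_apply, dotProduct, one_apply, mul_comm] using this
  have h2 : V * Vᴴ = 1 := mul_eq_one_comm.mp h1
  ext i j
  have := congrFun (congrFun h2 i) j
  simp only [hV, mul_apply, conjTranspose_apply, Matrix.of_apply] at this
  simpa [Matrix.sum_apply, vecMulVec_apply] using this

lemma dot_expand (x y : Fin n → ℂ) :
    star x ⬝ᵥ y = ∑ i, (starRingEnd ℂ) (star (v i) ⬝ᵥ x) * (star (v i) ⬝ᵥ y) := by
  have h0 : y = (1 : Matrix (Fin n) (Fin n) ℂ) *ᵥ y := by simp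
  conv_lhs => rw [h0, ← onb_complete hv]
  rw [sum_mulVec, dotProduct_finsum]
  refine Finset.sum_congr rfl fun i _ => ?_
  rw [vecMulVec_mulVec, dotProduct_smul]
  rw [show star x ⬝ᵥ v i = (starRingEnd ℂ) (star (v i) ⬝ᵥ x) by
    rw [star_dotProduct]; rfl]
  rw [smul_eq_mul]; ring

lemma nsq_expand (x : Fin n → ℂ) :
    nsq x = ∑ i, Complex.normSq (star (v i) ⬝ᵥ x) := by
  have h2 : (nsq x : ℂ) = ((∑ i, Complex.normSq (star (v i) ⬝ᵥ x) : ℝ) : ℂ) := by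
    rw [← dot_self_eq_nsq, dot_expand hv x x]
    push_cast
    refine Finset.sum_congr rfl fun i _ => ?_
    rw [Complex.normSq_eq_conj_mul_self]
  exact_mod_cast h2

lemma trace_onb (A : Matrix (Fin n) (Fin n) ℂ) :
    A.trace = ∑ i, star (v i) ⬝ᵥ (A *ᵥ v i) := by
  have h0 : A = A * 1 := by simp
  conv_lhs => rw [h0, ← onb_complete hv, Finset.mul_sum]
  rw [trace_sum]
  refine Finset.sum_congr rfl fun i _ => ?_
  rw [← trace_vecMulVec_mul (v i) (v i) A, trace_mul_comm]

lemma dot_sum_coeff (c : Fin n → ℂ) (i : Fin n) :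
    star (v i) ⬝ᵥ (∑ j, c j • v j) = c i := by
  rw [dotProduct_finsum]
  simp only [dotProduct_smul, hv]
  simp [Finset.sum_ite_eq, smul_eq_mul, mul_ite]

lemma nsq_sum_smul (c : Fin n → ℂ) :
    nsq (∑ j, c j • v j) = ∑ j, Complex.normSq (c j) := by
  have h : (nsq (∑ j, c j • v j) : ℂ) = ((∑ j, Complex.normSq (c j) : ℝ) : ℂ) := by
    rw [← dot_self_eq_nsq]
    rw [star_sum]
    simp only [star_smul]
    rw [finsum_dotProduct]
    push_cast
    refine Finset.sum_congr rfl fun j _ => ?_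
    rw [dotProduct_finsum]
    simp only [smul_dotProduct, dotProduct_smul, hv, smul_eq_mul, mul_ite, mul_one, mul_zero,
      Finset.sum_ite_eq, Finset.mem_univ, if_true]
    rw [Complex.normSq_eq_conj_mul_self]
    simp [Complex.star_def]; ring
  exact_mod_cast h

end ONB


open ComplexOrder
variable {n : ℕ}

lemma traceNorm_eq_sum_sqrt (Y : Matrix (Fin n) (Fin n) ℂ) :
    traceNorm Y = ∑ i, Real.sqrt ((Matrix.posSemidef_conjTranspose_mul_self Y).1.eigenvalues i) := by
  rw [traceNorm]
  rw [trace_mul_comm]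
  rw [← mul_assoc]
  rw [Unitary.coe_star_mul_self]
  rw [one_mul, trace_diagonal]
  rw [Complex.re_sum]
  exact Finset.sum_congr rfl fun i _ => by simp [Function.comp]

/-- orthonormality of the eigenvector basis, in dot-product language -/
lemma eigenbasis_orthonormal {Y : Matrix (Fin n) (Fin n) ℂ} (hY : Y.IsHermitian) :
    ∀ i j, star (⇑(hY.eigenvectorBasis i) : Fin n → ℂ) ⬝ᵥ ⇑(hY.eigenvectorBasis j)
      = if i = j then 1 else 0 := by
  intro i j
  have := orthonormal_iff_ite.mp hY.eigenvectorBasis.orthonormal i j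
  rw [← this, EuclideanSpace.inner_eq_star_dotProduct, dotProduct_comm]


section Eigen
variable {n : ℕ}

/-- dot products of images of eigenvectors under `X` -/
lemma dot_image_eigen (X : Matrix (Fin n) (Fin n) ℂ) (j k : Fin n) :
    star (X *ᵥ ⇑((Matrix.posSemidef_conjTranspose_mul_self X).1.eigenvectorBasis j))
      ⬝ᵥ (X *ᵥ ⇑((Matrix.posSemidef_conjTranspose_mul_self X).1.eigenvectorBasis k))
    = if j = k then (((Matrix.posSemidef_conjTranspose_mul_self X).1.eigenvalues k : ℝ) : ℂ)
      else 0 := by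
  set hH := (Matrix.posSemidef_conjTranspose_mul_self X).1
  set v : Fin n → (Fin n → ℂ) := fun i => ⇑(hH.eigenvectorBasis i) with hvdef
  rw [star_mulVec, ← dotProduct_mulVec, mulVec_mulVec]
  have he : (Xᴴ * X) *ᵥ v k = (((hH.eigenvalues k : ℝ) : ℂ)) • v k := by
    have h1 := hH.mulVec_eigenvectorBasis k
    rw [show (Xᴴ * X) *ᵥ v k = (Xᴴ * X) *ᵥ ⇑(hH.eigenvectorBasis k) from rfl, h1]
    funext l
    simp only [Pi.smul_apply, smul_eq_mul, Complex.real_smul]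
    rfl
  rw [he, dotProduct_smul, eigenbasis_orthonormal hH j k]
  simp [smul_eq_mul, mul_ite]

/-- existence of the contractive "polar factor" with trace identity -/
lemma exists_polar (X : Matrix (Fin n) (Fin n) ℂ) :
    ∃ W : Matrix (Fin n) (Fin n) ℂ,
      (∀ y, nsq (W *ᵥ y) ≤ nsq y) ∧ (Wᴴ * X).trace = (traceNorm X : ℂ) := by
  set hH := (Matrix.posSemidef_conjTranspose_mul_self X).1 with hHdef
  set v : Fin n → (Fin n → ℂ) := fun i => ⇑(hH.eigenvectorBasis i) with hvdef
  set d : Fin n → ℝ := hH.eigenvalues with hddef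
  have hv : ∀ i j, star (v i) ⬝ᵥ v j = if i = j then 1 else 0 :=
    eigenbasis_orthonormal hH
  have hd : ∀ i, 0 ≤ d i := fun i =>
    (Matrix.posSemidef_conjTranspose_mul_self X).eigenvalues_nonneg i
  have hkey : ∀ j k, star (X *ᵥ v j) ⬝ᵥ (X *ᵥ v k)
      = if j = k then ((d k : ℝ) : ℂ) else 0 := dot_image_eigen X
  set w : Fin n → ℝ := fun j => (Real.sqrt (d j))⁻¹ with hwdef
  have hw2d : ∀ j, w j ^ 2 * d j = if d j = 0 then 0 else 1 := by
    intro j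
    by_cases h : d j = 0
    · simp [h, hwdef]
    · rw [if_neg h, hwdef]
      rw [inv_pow, Real.sq_sqrt (hd j)]
      field_simp
  refine ⟨∑ j, ((w j : ℝ) : ℂ) • vecMulVec (X *ᵥ v j) (star (v j)), ?_, ?_⟩
  · intro y
    have hWy : (∑ j, ((w j : ℝ) : ℂ) • vecMulVec (X *ᵥ v j) (star (v j))) *ᵥ y
        = ∑ j, ((w j : ℂ) * (star (v j) ⬝ᵥ y)) • (X *ᵥ v j) := by
      rw [sum_mulVec]
      refine Finset.sum_congr rfl fun j _ => ?_
      rw [smul_mulVec, _root_.vecMulVec_mulVec, smul_smul]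
    rw [hWy]
    -- expand the squared norm via hkey
    have hnorm : nsq (∑ j, ((w j : ℂ) * (star (v j) ⬝ᵥ y)) • (X *ᵥ v j))
        = ∑ j, Complex.normSq ((w j : ℂ) * (star (v j) ⬝ᵥ y)) * d j := by
      have hc : (nsq (∑ j, ((w j : ℂ) * (star (v j) ⬝ᵥ y)) • (X *ᵥ v j)) : ℂ)
          = ((∑ j, Complex.normSq ((w j : ℂ) * (star (v j) ⬝ᵥ y)) * d j : ℝ) : ℂ) := by
        rw [← dot_self_eq_nsq, star_sum]
        simp only [star_smul]
        rw [finsum_dotProduct]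
        push_cast
        refine Finset.sum_congr rfl fun j _ => ?_
        rw [dotProduct_finsum]
        simp only [smul_dotProduct, dotProduct_smul, hkey, smul_eq_mul, mul_ite, mul_one,
          mul_zero, Finset.sum_ite_eq, Finset.mem_univ, if_true]
        rw [Complex.normSq_eq_conj_mul_self]
        simp [Complex.star_def]
        ring
      exact_mod_cast hc
    rw [hnorm, nsq_expand hv y]
    refine Finset.sum_le_sum fun j _ => ?_
    rw [Complex.normSq_mul]
    have : Complex.normSq ((w j : ℂ)) = w j ^ 2 := by
      simp [Complex.normSq_ofReal, sq]
    rw [this]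
    rw [mul_comm (w j ^2) _, mul_assoc]
    have h2 : w j ^ 2 * d j ≤ 1 := by
      rw [hw2d j]; split <;> norm_num
    calc Complex.normSq (star (v j) ⬝ᵥ y) * (w j ^ 2 * d j)
        ≤ Complex.normSq (star (v j) ⬝ᵥ y) * 1 :=
          mul_le_mul_of_nonneg_left h2 (Complex.normSq_nonneg _)
      _ = _ := mul_one _
  · -- trace identity
    have hWH : (∑ j, ((w j : ℝ) : ℂ) • vecMulVec (X *ᵥ v j) (star (v j)))ᴴ
        = ∑ j, ((w j : ℝ) : ℂ) • vecMulVec (v j) (star (X *ᵥ v j)) := by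
      rw [conjTranspose_sum]
      refine Finset.sum_congr rfl fun j _ => ?_
      rw [conjTranspose_smul, vecMulVec_conjTranspose]
      simp [Complex.star_def, Complex.conj_ofReal]
    rw [hWH, Finset.sum_mul, trace_sum]
    rw [traceNorm_eq_sum_sqrt]
    push_cast
    refine Finset.sum_congr rfl fun j _ => ?_
    rw [smul_mul_assoc, trace_smul, trace_vecMulVec_mul, hkey j j]
    simp only [if_true, smul_eq_mul]
    have hde : (Matrix.posSemidef_conjTranspose_mul_self X).1.eigenvalues j = d j := rfl
    rw [hde]
    by_cases h : d j = 0
    · simp [h]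
    · have hwd : w j * d j = Real.sqrt (d j) := by
        have hpos : 0 < d j := lt_of_le_of_ne (hd j) (Ne.symm h)
        have hs : Real.sqrt (d j) ≠ 0 := ne_of_gt (Real.sqrt_pos.mpr hpos)
        rw [hwdef]
        field_simp
        rw [Real.sq_sqrt (hd j)]
      rw [show ((w j : ℝ) : ℂ) * ((d j : ℝ) : ℂ) = ((w j * d j : ℝ) : ℂ) by push_cast; ring, hwd]
end Eigen

section Main
variable {n : ℕ}

lemma vecMulVec_mul_vecMulVec (u w y z : Fin n → ℂ) :
    vecMulVec u (star w) * vecMulVec y (star z)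
      = (star w ⬝ᵥ y) • vecMulVec u (star z) := by
  ext i j
  simp only [mul_apply, vecMulVec_apply, Pi.smul_apply, Matrix.smul_apply, smul_eq_mul, dotProduct,
    Pi.star_apply, Finset.sum_mul]
  refine Finset.sum_congr rfl fun k _ => by ring

lemma re_trace_mul_le_traceNorm (M Y : Matrix (Fin n) (Fin n) ℂ)
    (hM : ∀ u, nsq (Mᴴ *ᵥ u) ≤ nsq u) :
    ((M * Y).trace).re ≤ traceNorm Y := by
  set hH := (Matrix.posSemidef_conjTranspose_mul_self Y).1 with hHdef
  set v : Fin n → (Fin n → ℂ) := fun i => ⇑(hH.eigenvectorBasis i) with hvdef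
  set d : Fin n → ℝ := hH.eigenvalues with hddef
  have hv : ∀ i j, star (v i) ⬝ᵥ v j = if i = j then 1 else 0 :=
    eigenbasis_orthonormal hH
  have hd : ∀ i, 0 ≤ d i := fun i =>
    (Matrix.posSemidef_conjTranspose_mul_self Y).eigenvalues_nonneg i
  rw [trace_onb hv (M * Y), Complex.re_sum, traceNorm_eq_sum_sqrt]
  refine Finset.sum_le_sum fun i _ => ?_
  have hde : (Matrix.posSemidef_conjTranspose_mul_self Y).1.eigenvalues i = d i := rfl
  rw [hde]
  have h1 : star (v i) ⬝ᵥ ((M * Y) *ᵥ v i) = star (Mᴴ *ᵥ v i) ⬝ᵥ (Y *ᵥ v i) := by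
    rw [star_mulVec, conjTranspose_conjTranspose, ← mulVec_mulVec, dotProduct_mulVec]
  rw [h1]
  have h2 := (Complex.re_le_norm _).trans (abs_dot_le (Mᴴ *ᵥ v i) (Y *ᵥ v i))
  refine h2.trans ?_
  have h3 : nsq (Y *ᵥ v i) = d i := by
    have := dot_image_eigen Y i i
    simp only [if_true] at this
    have h4 : (star (Y *ᵥ v i) ⬝ᵥ (Y *ᵥ v i)).re = ((d i : ℂ)).re := by rw [this]
    rw [re_dot_self_eq_nsq] at h4
    simpa using h4
  have h5 : nsq (v i) = 1 := by
    have h6 : (star (v i) ⬝ᵥ v i).re = (1 : ℂ).re := by rw [hv i i]; simp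
    rw [re_dot_self_eq_nsq] at h6
    simpa using h6
  have h7 : Real.sqrt (nsq (Mᴴ *ᵥ v i)) ≤ 1 := by
    have := Real.sqrt_le_sqrt (hM (v i))
    rwa [h5, Real.sqrt_one] at this
  rw [h3]
  calc Real.sqrt (nsq (Mᴴ *ᵥ v i)) * Real.sqrt (d i)
      ≤ 1 * Real.sqrt (d i) := by
        exact mul_le_mul_of_nonneg_right h7 (Real.sqrt_nonneg _)
    _ = Real.sqrt (d i) := one_mul _

end Main

end Aux11

/-- For orthonormal bases `{aᵢ}, {bᵢ}` of `ℂⁿ` and `|γᵢ| ≥ 1`, with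
`S = ∑ᵢ γᵢ |aᵢ⟩⟨bᵢ|`, one has
`‖S X S*‖₁ ≥ ‖X‖₁ + ∑ᵢ (|γᵢ|² - 1) ⟨bᵢ| X |bᵢ⟩` for every `X ∈ Mₙ(ℂ)`. -/
theorem stmt11 {n : ℕ} (a b : Fin n → (Fin n → ℂ)) (γ : Fin n → ℂ)
    (ha : ∀ i j, star (a i) ⬝ᵥ a j = if i = j then 1 else 0)
    (hb : ∀ i j, star (b i) ⬝ᵥ b j = if i = j then 1 else 0)
    (hγ : ∀ i, 1 ≤ ‖γ i‖)
    (X : Matrix (Fin n) (Fin n) ℂ) :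
    traceNorm X + ∑ i, (‖γ i‖ ^ 2 - 1) * (star (b i) ⬝ᵥ (X *ᵥ b i)).re
      ≤ traceNorm ((∑ i, γ i • Matrix.vecMulVec (a i) (star (b i))) * X *
          (∑ i, γ i • Matrix.vecMulVec (a i) (star (b i)))ᴴ) := by
  classical
  set S : Matrix (Fin n) (Fin n) ℂ := ∑ i, γ i • Matrix.vecMulVec (a i) (star (b i)) with hSdef
  have hγ0 : ∀ i, γ i ≠ 0 := by
    intro i h
    have := hγ i
    rw [h] at this
    simp only [norm_zero] at this
    linarith
  set g : Fin n → ℝ := fun i => ‖γ i‖ ^ 2 with hgdef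
  have hg1 : ∀ i, 1 ≤ g i := by
    intro i
    have := hγ i
    simp only [hgdef]
    nlinarith
  have hg0 : ∀ i, (0:ℝ) < g i := fun i => lt_of_lt_of_le one_pos (hg1 i)
  set c : Fin n → ℝ := fun i => g i - 1 with hcdef
  have hc0 : ∀ i, 0 ≤ c i := fun i => by simp only [hcdef]; linarith [hg1 i]
  set T : Matrix (Fin n) (Fin n) ℂ := ∑ i, (γ i)⁻¹ • Matrix.vecMulVec (b i) (star (a i))
    with hTdef
  obtain ⟨W, hW, hWtr⟩ := exists_polar X
  set D : Matrix (Fin n) (Fin n) ℂ := ∑ i, ((c i : ℝ) : ℂ) • Matrix.vecMulVec (b i) (star (b i))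
    with hDdef
  -- T * S = 1
  have hTS : T * S = 1 := by
    rw [hTdef, hSdef, Finset.sum_mul]
    calc (∑ i, ((γ i)⁻¹ • Matrix.vecMulVec (b i) (star (a i)))
            * (∑ j, γ j • Matrix.vecMulVec (a j) (star (b j))))
        = ∑ i, ∑ j, ((γ i)⁻¹ * γ j * (star (a i) ⬝ᵥ a j)) • vecMulVec (b i) (star (b j)) := by
          refine Finset.sum_congr rfl fun i _ => ?_
          rw [Finset.mul_sum]
          refine Finset.sum_congr rfl fun j _ => ?_
          rw [Matrix.smul_mul, Matrix.mul_smul, _root_.vecMulVec_mul_vecMulVec, smul_smul, smul_smul,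
            mul_assoc]
      _ = ∑ i, vecMulVec (b i) (star (b i)) := by
          refine Finset.sum_congr rfl fun i _ => ?_
          rw [Finset.sum_eq_single i]
          · rw [ha i i, if_pos rfl, mul_one, inv_mul_cancel₀ (hγ0 i), one_smul]
          · intro j _ hj
            rw [ha i j, if_neg (Ne.symm hj)]
            simp
          · intro h; exact absurd (Finset.mem_univ i) h
      _ = 1 := onb_complete hb
  have hST : S * T = 1 := mul_eq_one_comm.mp hTS
  -- mulVec formulas
  have hS_mv : ∀ x, S *ᵥ x = ∑ i, (γ i * (star (b i) ⬝ᵥ x)) • a i := by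
    intro x
    rw [hSdef, _root_.sum_mulVec]
    refine Finset.sum_congr rfl fun i _ => ?_
    rw [smul_mulVec, _root_.vecMulVec_mulVec, smul_smul]
  have hTH : Tᴴ = ∑ i, (starRingEnd ℂ) (γ i)⁻¹ • Matrix.vecMulVec (a i) (star (b i)) := by
    rw [hTdef, conjTranspose_sum]
    refine Finset.sum_congr rfl fun i _ => ?_
    rw [conjTranspose_smul, vecMulVec_conjTranspose, star_star]
    rfl
  have hTH_mv : ∀ z, Tᴴ *ᵥ z = ∑ i, ((starRingEnd ℂ) (γ i)⁻¹ * (star (b i) ⬝ᵥ z)) • a i := by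
    intro z
    rw [hTH, _root_.sum_mulVec]
    refine Finset.sum_congr rfl fun i _ => ?_
    rw [smul_mulVec, _root_.vecMulVec_mulVec, smul_smul]
  have hD_mv : ∀ x, D *ᵥ x = ∑ i, ((c i : ℂ) * (star (b i) ⬝ᵥ x)) • b i := by
    intro x
    rw [hDdef, _root_.sum_mulVec]
    refine Finset.sum_congr rfl fun i _ => ?_
    rw [smul_mulVec, _root_.vecMulVec_mulVec, smul_smul]
  -- nsq formulas
  have hnsq_S : ∀ x, nsq (S *ᵥ x) = ∑ i, g i * Complex.normSq (star (b i) ⬝ᵥ x) := by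
    intro x
    rw [hS_mv, nsq_sum_smul ha]
    refine Finset.sum_congr rfl fun i _ => ?_
    rw [Complex.normSq_mul, Complex.normSq_eq_norm_sq]
  have hnsq_TH : ∀ z, nsq (Tᴴ *ᵥ z) = ∑ i, (g i)⁻¹ * Complex.normSq (star (b i) ⬝ᵥ z) := by
    intro z
    rw [hTH_mv, nsq_sum_smul ha]
    refine Finset.sum_congr rfl fun i _ => ?_
    rw [Complex.normSq_mul, Complex.normSq_conj, Complex.normSq_inv, Complex.normSq_eq_norm_sq]
  have hDH : Dᴴ = D := by
    rw [hDdef, conjTranspose_sum]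
    refine Finset.sum_congr rfl fun i _ => ?_
    rw [conjTranspose_smul, vecMulVec_conjTranspose, star_star]
    congr 1
    simp [Complex.star_def, Complex.conj_ofReal]
  set M : Matrix (Fin n) (Fin n) ℂ := Tᴴ * (Wᴴ + D) * T with hMdef
  have hMH : Mᴴ = Tᴴ * (W + D) * T := by
    rw [hMdef, conjTranspose_mul, conjTranspose_mul, conjTranspose_conjTranspose,
      conjTranspose_add, conjTranspose_conjTranspose, hDH]
    rw [mul_assoc]
  -- the contraction property
  have hcontr : ∀ u, nsq (Mᴴ *ᵥ u) ≤ nsq u := by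
    intro u
    rw [hMH]
    set x : Fin n → ℂ := T *ᵥ u with hx
    have hxu : S *ᵥ x = u := by rw [hx, mulVec_mulVec, hST, one_mulVec]
    have hMu : (Tᴴ * (W + D) * T) *ᵥ u = Tᴴ *ᵥ ((W + D) *ᵥ x) := by
      rw [← mulVec_mulVec, ← mulVec_mulVec]
    set z : Fin n → ℂ := (W + D) *ᵥ x with hz
    set ξ : Fin n → ℂ := fun i => star (b i) ⬝ᵥ x with hξ
    set ζ : Fin n → ℂ := fun i => star (b i) ⬝ᵥ z with hζ
    set η : Fin n → ℂ := fun i => (((g i)⁻¹ : ℝ) : ℂ) * ζ i with hη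
    set N : ℝ := ∑ i, g i * Complex.normSq (ξ i) with hN
    set Q : ℝ := ∑ i, (g i)⁻¹ * Complex.normSq (ζ i) with hQ
    have hQ0 : 0 ≤ Q := Finset.sum_nonneg fun i _ =>
      mul_nonneg (inv_nonneg.mpr (le_of_lt (hg0 i))) (Complex.normSq_nonneg _)
    have hN0 : 0 ≤ N := Finset.sum_nonneg fun i _ =>
      mul_nonneg (le_of_lt (hg0 i)) (Complex.normSq_nonneg _)
    have goal_eq1 : nsq ((Tᴴ * (W + D) * T) *ᵥ u) = Q := by rw [hMu, hnsq_TH z]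
    have goal_eq2 : nsq u = N := by rw [← hxu, hnsq_S x]
    rw [goal_eq1, goal_eq2]
    -- now prove Q ≤ N
    set y : Fin n → ℂ := ∑ i, η i • b i with hy
    have hηy : ∀ i, star (b i) ⬝ᵥ y = η i := fun i => dot_sum_coeff hb η i
    have hQre : (star y ⬝ᵥ z).re = Q := by
      rw [dot_expand hb y z]
      rw [Complex.re_sum]
      refine Finset.sum_congr rfl fun i _ => ?_
      rw [hηy i]
      have heq : (starRingEnd ℂ) (η i) * ζ i
          = (((g i)⁻¹ * Complex.normSq (ζ i) : ℝ) : ℂ) := by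
        simp only [hη]
        rw [_root_.map_mul, Complex.conj_ofReal, mul_assoc,
          mul_comm ((starRingEnd ℂ) (ζ i)) (ζ i)]
        rw [mul_comm (ζ i) ((starRingEnd ℂ) (ζ i)), ← Complex.normSq_eq_conj_mul_self]
        norm_cast
      rw [heq, Complex.ofReal_re]
    have hsplit : star y ⬝ᵥ z = star y ⬝ᵥ (W *ᵥ x) + star y ⬝ᵥ (D *ᵥ x) := by
      rw [hz, add_mulVec, dotProduct_add]
    -- second term bound
    have ht2 : ‖star y ⬝ᵥ (D *ᵥ x)‖
        ≤ Real.sqrt (∑ i, c i * Complex.normSq (η i))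
          * Real.sqrt (∑ i, c i * Complex.normSq (ξ i)) := by
      have hform : star y ⬝ᵥ (D *ᵥ x)
          = ∑ i, ((c i : ℂ) * ξ i) * (starRingEnd ℂ) (η i) := by
        rw [hD_mv x, dotProduct_finsum]
        refine Finset.sum_congr rfl fun i _ => ?_
        rw [dotProduct_smul]
        rw [show star y ⬝ᵥ b i = (starRingEnd ℂ) (star (b i) ⬝ᵥ y) by
          rw [star_dotProduct]; rfl]
        rw [hηy i, smul_eq_mul]
      rw [hform]
      calc ‖∑ i, ((c i : ℂ) * ξ i) * (starRingEnd ℂ) (η i)‖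
          ≤ ∑ i, ‖((c i : ℂ) * ξ i) * (starRingEnd ℂ) (η i)‖ :=
            norm_sum_le _ _
        _ = ∑ i, (Real.sqrt (c i) * ‖η i‖)
              * (Real.sqrt (c i) * ‖ξ i‖) := by
            refine Finset.sum_congr rfl fun i _ => ?_
            rw [norm_mul, norm_mul]
            rw [Complex.norm_real, Real.norm_of_nonneg (hc0 i), Complex.norm_conj]
            linear_combination (‖ξ i‖ * ‖η i‖)
              * (Real.mul_self_sqrt (hc0 i)).symm
        _ ≤ Real.sqrt (∑ i, (Real.sqrt (c i) * ‖η i‖) ^ 2)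
              * Real.sqrt (∑ i, (Real.sqrt (c i) * ‖ξ i‖) ^ 2) :=
            sum_le_sqrt_mul_sqrt _ _
              (fun i => mul_nonneg (Real.sqrt_nonneg _) (norm_nonneg _))
              (fun i => mul_nonneg (Real.sqrt_nonneg _) (norm_nonneg _))
        _ = Real.sqrt (∑ i, c i * Complex.normSq (η i))
              * Real.sqrt (∑ i, c i * Complex.normSq (ξ i)) := by
            congr 1 <;>
            · congr 1
              refine Finset.sum_congr rfl fun i _ => ?_
              rw [mul_pow, Real.sq_sqrt (hc0 i), Complex.sq_norm]
    -- first term bound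
    have ht1 : ‖star y ⬝ᵥ (W *ᵥ x)‖
        ≤ Real.sqrt (nsq y) * Real.sqrt (nsq x) := by
      refine (abs_dot_le y (W *ᵥ x)).trans ?_
      exact mul_le_mul_of_nonneg_left (Real.sqrt_le_sqrt (hW x)) (Real.sqrt_nonneg _)
    -- Parseval
    have hy_par : nsq y = ∑ i, Complex.normSq (η i) := nsq_sum_smul hb η
    have hx_par : nsq x = ∑ i, Complex.normSq (ξ i) := nsq_expand hb x
    -- identities
    have hid1 : nsq y + ∑ i, c i * Complex.normSq (η i) = Q := by
      rw [hy_par, ← Finset.sum_add_distrib]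
      refine Finset.sum_congr rfl fun i _ => ?_
      have hηn : Complex.normSq (η i) = ((g i)⁻¹) ^ 2 * Complex.normSq (ζ i) := by
        rw [hη]
        rw [Complex.normSq_mul, Complex.normSq_ofReal]
        ring
      rw [hηn, hcdef]
      have := (hg0 i).ne'
      field_simp
      ring
    have hid2 : nsq x + ∑ i, c i * Complex.normSq (ξ i) = N := by
      rw [hx_par, ← Finset.sum_add_distrib]
      refine Finset.sum_congr rfl fun i _ => ?_
      rw [hcdef]
      ring
    -- combine
    have hQle : Q ≤ Real.sqrt Q * Real.sqrt N := by
      calc Q = (star y ⬝ᵥ z).re := hQre.symm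
        _ ≤ ‖star y ⬝ᵥ z‖ := Complex.re_le_norm _
        _ ≤ ‖star y ⬝ᵥ (W *ᵥ x)‖ + ‖star y ⬝ᵥ (D *ᵥ x)‖ := by
            rw [hsplit]; exact norm_add_le _ _
        _ ≤ Real.sqrt (nsq y) * Real.sqrt (nsq x)
            + Real.sqrt (∑ i, c i * Complex.normSq (η i))
              * Real.sqrt (∑ i, c i * Complex.normSq (ξ i)) := add_le_add ht1 ht2
        _ ≤ Real.sqrt (nsq y + ∑ i, c i * Complex.normSq (η i))
            * Real.sqrt (nsq x + ∑ i, c i * Complex.normSq (ξ i)) :=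
            two_cs _ _ _ _ (nsq_nonneg y)
              (Finset.sum_nonneg fun i _ => mul_nonneg (hc0 i) (Complex.normSq_nonneg _))
              (nsq_nonneg x)
              (Finset.sum_nonneg fun i _ => mul_nonneg (hc0 i) (Complex.normSq_nonneg _))
        _ = Real.sqrt Q * Real.sqrt N := by rw [hid1, hid2]
    nlinarith [Real.sq_sqrt hQ0, Real.sq_sqrt hN0, Real.sqrt_nonneg Q, Real.sqrt_nonneg N,
      sq_nonneg (Real.sqrt Q - Real.sqrt N)]
  -- trace identities
  have htr1 : (M * (S * X * Sᴴ)).trace = ((Wᴴ + D) * X).trace := by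
    have h1 : M * (S * X * Sᴴ) = Tᴴ * ((Wᴴ + D) * (X * Sᴴ)) := by
      rw [hMdef]
      calc Tᴴ * (Wᴴ + D) * T * (S * X * Sᴴ)
          = Tᴴ * ((Wᴴ + D) * ((T * S) * (X * Sᴴ))) := by
            simp only [mul_assoc]
        _ = Tᴴ * ((Wᴴ + D) * (X * Sᴴ)) := by rw [hTS, one_mul]
    rw [h1, trace_mul_comm]
    have h2 : (Wᴴ + D) * (X * Sᴴ) * Tᴴ = (Wᴴ + D) * (X * (Sᴴ * Tᴴ)) := by
      simp only [mul_assoc]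
    rw [h2, ← conjTranspose_mul, hTS, conjTranspose_one, mul_one]
  have htr2 : (((Wᴴ + D) * X).trace).re
      = traceNorm X + ∑ i, c i * (star (b i) ⬝ᵥ (X *ᵥ b i)).re := by
    rw [add_mul, trace_add, Complex.add_re, hWtr, Complex.ofReal_re]
    congr 1
    rw [hDdef, Finset.sum_mul, trace_sum, Complex.re_sum]
    refine Finset.sum_congr rfl fun i _ => ?_
    rw [Matrix.smul_mul, trace_smul, trace_vecMulVec_mul]
    simp [smul_eq_mul, Complex.mul_re, Complex.ofReal_re, Complex.ofReal_im]
  -- conclusion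
  have hfinal := re_trace_mul_le_traceNorm M (S * X * Sᴴ) hcontr
  rw [htr1] at hfinal
  rw [htr2] at hfinal
  exact hfinal
end
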